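/- arXiv:1602.03728 — 2 statements merged into one kernel-verified Lean document; each statement's English description precedes it below -/
import Mathlib

section
/- For three first-order differential operators L₁, L₂, L₃, the composition expands as L₃ ⋄ L₂ ⋄ L₁ = L₃ • L₂ • L₁ + L₃ • (L₂ ∘ L₁) + L₂ • (L₃ ∘ L₁) + (L₃ ∘ L₂) • L₁ + (L₃ ⋄ L₂) ∘ L₁. -/
open Finsupp

/-- The space of linear differential operators in `n` variables (with polynomial
coefficients over `ℂ`): a formal finite sum `Σ_α u_α ∂^α`. -/
abbrev Diff (n : ℕ) := (Fin n →₀ ℕ) →₀ MvPolynomial (Fin n) ℂ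

/-- The operator `∂^α = ∂₁^{α₁} ⋯ ∂ₙ^{αₙ}` acting on coefficient functions. -/
noncomputable def Dop {n : ℕ} (α : Fin n →₀ ℕ) :
    Module.End ℂ (MvPolynomial (Fin n) ℂ) :=
  (List.ofFn fun i : Fin n => ((MvPolynomial.pderiv i).toLinearMap) ^ (α i)).prod

/-- White multiplication: `(u ∂^α) ∘ (v ∂^β) = u ∂^α(v) ∂^β`, extended bilinearly. -/
noncomputable def white {n : ℕ} (X Y : Diff n) : Diff n :=
  X.sum fun α u => Y.sum fun β v => Finsupp.single β (u * Dop α v)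

/-- Black multiplication: `(u ∂^α) • (v ∂^β) = u v ∂^{α+β}`, extended bilinearly. -/
noncomputable def black {n : ℕ} (X Y : Diff n) : Diff n :=
  X.sum fun α u => Y.sum fun β v => Finsupp.single (α + β) (u * v)

/-- Composition of differential operators:
`(u ∂^α) ⋄ (v ∂^β) = Σ_{γ ≤ α} binom(α,γ) u ∂^γ(v) ∂^{α+β-γ}`, extended bilinearly. -/
noncomputable def diam {n : ℕ} (X Y : Diff n) : Diff n :=
  X.sum fun α u => Y.sum fun β v =>
    ∑ γ ∈ Finset.Iic α,
      Finsupp.single (α + β - γ) (((∏ i, ((α i).choose (γ i)) : ℕ) : ℂ) • (u * Dop γ v))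

/-- A differential operator is of first order (a vector field) if it has the
form `Σ_i u_i ∂_i`, i.e. every multi-index in its support has total degree 1. -/
def IsVect {n : ℕ} (X : Diff n) : Prop :=
  ∀ α ∈ X.support, (α.sum fun _ k => k) = 1

/-- The identity differential operator `1·∂^0`. -/
noncomputable def unitD {n : ℕ} : Diff n := Finsupp.single 0 1

/-- Composition (`⋄`-)power `L^m = L ⋄ ⋯ ⋄ L`. -/
noncomputable def dpow {n : ℕ} (L : Diff n) : ℕ → Diff n
  | 0 => unitD
  | m + 1 => diam L (dpow L m)

/-- Black power `X^{•k} = X • ⋯ • X`. -/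
noncomputable def bpow {n : ℕ} (X : Diff n) : ℕ → Diff n
  | 0 => unitD
  | k + 1 => black X (bpow X k)


lemma my_pderiv_comm {n : ℕ} (i j : Fin n) (p : MvPolynomial (Fin n) ℂ) :
    MvPolynomial.pderiv i (MvPolynomial.pderiv j p)
      = MvPolynomial.pderiv j (MvPolynomial.pderiv i p) := by
  induction p using MvPolynomial.induction_on with
  | C a => simp
  | add p q hp hq => simp [hp, hq]
  | mul_X p k hp =>
      simp only [MvPolynomial.pderiv_mul, MvPolynomial.pderiv_X, map_add,
        MvPolynomial.pderiv_mul, hp]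
      ring_nf
      simp only [Pi.single_apply]
      split_ifs <;> simp [MvPolynomial.pderiv_one]

lemma ofFn_prod_mul {M : Type*} [Monoid M] :
    ∀ {m : ℕ} (f g : Fin m → M), (∀ i j, Commute (f i) (g j)) →
      (List.ofFn fun i => f i * g i).prod = (List.ofFn f).prod * (List.ofFn g).prod := by
  intro m
  induction m with
  | zero => intro f g _; simp
  | succ m ih =>
      intro f g h
      have hc : Commute (g 0) (List.ofFn (f ∘ Fin.succ)).prod := by
        apply Commute.list_prod_right
        intro x hx
        obtain ⟨i, rfl⟩ := List.mem_ofFn.mp hx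
        exact (h _ 0).symm
      have him := ih (f ∘ Fin.succ) (g ∘ Fin.succ) (fun i j => h _ _)
      simp only [Function.comp] at him
      simp only [List.ofFn_succ, List.prod_cons, Function.comp, him]
      have := hc.eq
      rw [mul_assoc, ← mul_assoc (g 0), this]
      simp [mul_assoc]
      rfl

lemma ofFn_prod_eq_single {M : Type*} [Monoid M] :
    ∀ {m : ℕ} (f : Fin m → M) (i : Fin m), (∀ j, j ≠ i → f j = 1) →
      (List.ofFn f).prod = f i := by
  intro m
  induction m with
  | zero => intro _ i; exact i.elim0
  | succ m ih =>
      intro f i h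
      rcases Fin.eq_zero_or_eq_succ i with rfl | ⟨i', rfl⟩
      · rw [List.ofFn_succ, List.prod_cons, List.prod_eq_one, mul_one]
        intro x hx
        obtain ⟨j, rfl⟩ := List.mem_ofFn.mp hx
        exact h _ (Fin.succ_ne_zero j)
      · rw [List.ofFn_succ, List.prod_cons, h 0 (Fin.succ_ne_zero i').symm, one_mul]
        exact ih _ i' fun j hj => h _ (by simpa using hj)


lemma Dop_zero {n : ℕ} : Dop (0 : Fin n →₀ ℕ) = 1 := by
  rw [Dop, List.prod_eq_one]
  intro x hx
  obtain ⟨j, rfl⟩ := List.mem_ofFn.mp hx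
  simp

lemma pd_commute {n : ℕ} (i j : Fin n) :
    Commute ((MvPolynomial.pderiv i).toLinearMap : Module.End ℂ (MvPolynomial (Fin n) ℂ))
      (MvPolynomial.pderiv j).toLinearMap := by
  refine LinearMap.ext fun p => ?_
  simpa [Module.End.mul_apply] using my_pderiv_comm i j p

lemma Dop_add {n : ℕ} (α β : Fin n →₀ ℕ) : Dop (α + β) = Dop α * Dop β := by
  rw [Dop, Dop, Dop, ← ofFn_prod_mul _ _ (fun i j => (pd_commute i j).pow_pow _ _)]
  have : (fun i : Fin n => ((MvPolynomial.pderiv i).toLinearMap :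
      Module.End ℂ (MvPolynomial (Fin n) ℂ)) ^ ((α + β) i))
      = fun i => (MvPolynomial.pderiv i).toLinearMap ^ (α i)
        * (MvPolynomial.pderiv i).toLinearMap ^ (β i) := by
    funext i
    rw [Finsupp.add_apply, pow_add]
  rw [this]

lemma Dop_single {n : ℕ} (i : Fin n) :
    Dop (Finsupp.single i 1) = (MvPolynomial.pderiv i).toLinearMap := by
  rw [Dop, ofFn_prod_eq_single _ i]
  · simp
  · intro j hj
    rw [Finsupp.single_apply, if_neg (fun h => hj h.symm), pow_zero]


lemma isVect_exists {n : ℕ} {α : Fin n →₀ ℕ} (h : (α.sum fun _ k => k) = 1) :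
    ∃ i, α = Finsupp.single i 1 := by
  classical
  have hs : ∑ j ∈ α.support, α j = 1 := h
  have hne : α.support.Nonempty := by
    by_contra hc
    rw [Finset.not_nonempty_iff_eq_empty] at hc
    rw [hc, Finset.sum_empty] at hs
    exact one_ne_zero hs.symm
  obtain ⟨i, hi⟩ := hne
  have h1 : α i + ∑ j ∈ α.support.erase i, α j = 1 := by
    rw [Finset.add_sum_erase _ _ hi]; exact hs
  have hαi : 1 ≤ α i := Nat.one_le_iff_ne_zero.mpr (Finsupp.mem_support_iff.mp hi)
  have hai : α i = 1 := by omega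
  have hrest : ∑ j ∈ α.support.erase i, α j = 0 := by omega
  refine ⟨i, Finsupp.ext fun j => ?_⟩
  by_cases hj : j = i
  · subst hj; simp [hai]
  · rw [Finsupp.single_apply, if_neg (fun hh => hj hh.symm)]
    by_cases hjs : j ∈ α.support
    · exact (Finset.sum_eq_zero_iff.mp hrest) j (Finset.mem_erase.mpr ⟨hj, hjs⟩)
    · exact Finsupp.notMem_support_iff.mp hjs

lemma Iic_single {n : ℕ} (i : Fin n) :
    Finset.Iic (Finsupp.single i (1:ℕ)) = {0, Finsupp.single i 1} := by
  ext γ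
  simp only [Finset.mem_Iic, Finset.mem_insert, Finset.mem_singleton]
  constructor
  · intro hγ
    have hle : ∀ j, γ j ≤ (Finsupp.single i 1) j := Finsupp.le_def.mp hγ
    have hi := hle i
    rw [Finsupp.single_eq_same] at hi
    rcases Nat.le_one_iff_eq_zero_or_eq_one.mp hi with h0 | h1
    · left
      refine Finsupp.ext fun j => ?_
      by_cases hj : j = i
      · subst hj; simpa using h0
      · have := hle j
        rw [Finsupp.single_apply, if_neg (fun hh => hj hh.symm)] at this
        simpa using this
    · right
      refine Finsupp.ext fun j => ?_
      by_cases hj : j = i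
      · subst hj; simp [h1]
      · have := hle j
        rw [Finsupp.single_apply, if_neg (fun hh => hj hh.symm)] at this
        rw [Finsupp.single_apply, if_neg (fun hh => hj hh.symm)]
        omega
  · rintro (rfl | rfl)
    · exact zero_le
    · exact le_refl _

lemma sum_white {n : ℕ} (Z Y : Diff n) (F : (Fin n →₀ ℕ) → MvPolynomial (Fin n) ℂ → Diff n)
    (hF0 : ∀ ε, F ε 0 = 0) (hFadd : ∀ ε x y, F ε (x + y) = F ε x + F ε y) :
    (white Z Y).sum F = Z.sum fun α u => Y.sum fun β v => F β (u * Dop α v) := by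
  rw [white, Finsupp.sum_sum_index hF0 hFadd]
  refine Finsupp.sum_congr fun α _ => ?_
  rw [Finsupp.sum_sum_index hF0 hFadd]
  exact Finsupp.sum_congr fun β _ => Finsupp.sum_single_index (hF0 β)

lemma sum_black {n : ℕ} (X Y : Diff n) (F : (Fin n →₀ ℕ) → MvPolynomial (Fin n) ℂ → Diff n)
    (hF0 : ∀ ε, F ε 0 = 0) (hFadd : ∀ ε x y, F ε (x + y) = F ε x + F ε y) :
    (black X Y).sum F = X.sum fun β v => Y.sum fun δ w => F (β + δ) (v * w) := by
  rw [black, Finsupp.sum_sum_index hF0 hFadd]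
  refine Finsupp.sum_congr fun β _ => ?_
  rw [Finsupp.sum_sum_index hF0 hFadd]
  exact Finsupp.sum_congr fun δ _ => Finsupp.sum_single_index (hF0 _)

lemma white_add_left {n : ℕ} (X X' Y : Diff n) :
    white (X + X') Y = white X Y + white X' Y := by
  rw [white, white, white]
  exact Finsupp.sum_add_index' (fun α => by simp)
    (fun α u u' => by simp [add_mul, Finsupp.single_add, Finsupp.sum_add])

lemma diam_add_right {n : ℕ} (X Y Y' : Diff n) :
    diam X (Y + Y') = diam X Y + diam X Y' := by
  rw [diam, diam, diam, ← Finsupp.sum_add]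
  refine Finsupp.sum_congr fun α _ => ?_
  exact Finsupp.sum_add_index' (fun β => by simp)
    (fun β v v' => by
      simp [map_add, mul_add, smul_add, Finsupp.single_add, Finset.sum_add_distrib])


lemma diam_eq {n : ℕ} (X Y : Diff n) (hX : IsVect X) :
    diam X Y = black X Y + white X Y := by
  rw [diam, black, white, ← Finsupp.sum_add]
  refine Finsupp.sum_congr fun α hα => ?_
  obtain ⟨i, rfl⟩ := isVect_exists (hX α hα)
  rw [← Finsupp.sum_add]
  refine Finsupp.sum_congr fun β _ => ?_
  rw [Iic_single, Finset.sum_pair (Ne.symm fun h => one_ne_zero (Finsupp.single_eq_zero.mp h))]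
  have t0 : (∏ j, ((Finsupp.single i 1 : Fin n →₀ ℕ) j).choose ((0 : Fin n →₀ ℕ) j)) = 1 := by
    simp
  have tα : (∏ j, ((Finsupp.single i 1 : Fin n →₀ ℕ) j).choose
      ((Finsupp.single i 1 : Fin n →₀ ℕ) j)) = 1 := by
    simp
  rw [t0, tα, Dop_zero, tsub_zero, add_tsub_cancel_left]
  simp


lemma whiteB {n : ℕ} (Z X Y : Diff n) (hZ : IsVect Z) :
    white Z (black X Y) = black (white Z X) Y + black X (white Z Y) := by
  have hL : white Z (black X Y) = Z.sum fun α u => X.sum fun β v => Y.sum fun δ w =>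
      Finsupp.single (β + δ) (u * Dop α (v * w)) := by
    rw [white]
    refine Finsupp.sum_congr fun α _ => ?_
    exact sum_black X Y _ (fun ε => by simp) (fun ε x y => by
      simp [map_add, mul_add, Finsupp.single_add])
  have hR1 : black (white Z X) Y = Z.sum fun α u => X.sum fun β v => Y.sum fun δ w =>
      Finsupp.single (β + δ) ((u * Dop α v) * w) := by
    rw [black]
    exact sum_white Z X _ (fun ε => by simp)
      (fun ε x y => by simp [add_mul, Finsupp.single_add, Finsupp.sum_add])
  have hR2 : black X (white Z Y) = Z.sum fun α u => X.sum fun β v => Y.sum fun δ w =>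
      Finsupp.single (β + δ) (v * (u * Dop α w)) := by
    rw [black]
    have : ∀ β v, ((white Z Y).sum fun ε x => Finsupp.single (β + ε) (v * x))
        = Z.sum fun α u => Y.sum fun δ w =>
            Finsupp.single (β + δ) (v * (u * Dop α w)) :=
      fun β v => sum_white Z Y _ (fun ε => by simp)
        (fun ε x y => by simp [mul_add, Finsupp.single_add])
    simp only [Finsupp.sum] at *
    rw [Finset.sum_congr rfl fun β hβ => this β (X β)]
    exact Finset.sum_comm
  rw [hL, hR1, hR2, ← Finsupp.sum_add]
  refine Finsupp.sum_congr fun α hα => ?_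
  obtain ⟨i, rfl⟩ := isVect_exists (hZ α hα)
  rw [← Finsupp.sum_add]
  refine Finsupp.sum_congr fun β _ => ?_
  rw [← Finsupp.sum_add]
  refine Finsupp.sum_congr fun δ _ => ?_
  rw [Dop_single]
  simp only [Derivation.coeFn_coe, MvPolynomial.pderiv_mul]
  rw [← Finsupp.single_add]
  congr 1
  ring


lemma whiteC {n : ℕ} (Z X Y : Diff n) (hZ : IsVect Z) :
    white Z (white X Y) = white (white Z X) Y + white (black Z X) Y := by
  have hL : white Z (white X Y) = Z.sum fun α u => X.sum fun β v => Y.sum fun δ w =>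
      Finsupp.single δ (u * Dop α (v * Dop β w)) := by
    rw [white]
    refine Finsupp.sum_congr fun α _ => ?_
    exact sum_white X Y _ (fun ε => by simp) (fun ε x y => by
      simp [map_add, mul_add, Finsupp.single_add])
  have hR1 : white (white Z X) Y = Z.sum fun α u => X.sum fun β v => Y.sum fun δ w =>
      Finsupp.single δ ((u * Dop α v) * Dop β w) := by
    rw [white]
    exact sum_white Z X _ (fun ε => by simp)
      (fun ε x y => by simp [add_mul, Finsupp.single_add, Finsupp.sum_add])
  have hR2 : white (black Z X) Y = Z.sum fun α u => X.sum fun β v => Y.sum fun δ w =>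
      Finsupp.single δ ((u * v) * Dop (α + β) w) := by
    rw [white]
    exact sum_black Z X _ (fun ε => by simp)
      (fun ε x y => by simp [add_mul, Finsupp.single_add, Finsupp.sum_add])
  rw [hL, hR1, hR2, ← Finsupp.sum_add]
  refine Finsupp.sum_congr fun α hα => ?_
  obtain ⟨i, rfl⟩ := isVect_exists (hZ α hα)
  rw [← Finsupp.sum_add]
  refine Finsupp.sum_congr fun β _ => ?_
  rw [← Finsupp.sum_add]
  refine Finsupp.sum_congr fun δ _ => ?_
  rw [Dop_add, Dop_single]
  simp only [Derivation.coeFn_coe, MvPolynomial.pderiv_mul, Module.End.mul_apply]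
  rw [← Finsupp.single_add]
  congr 1
  ring


/-- `L₃ ⋄ L₂ ⋄ L₁ = L₃•L₂•L₁ + L₃•(L₂∘L₁) + L₂•(L₃∘L₁)
 + (L₃∘L₂)•L₁ + (L₃⋄L₂)∘L₁`. -/
theorem comp_three {n : ℕ} (L₁ L₂ L₃ : Diff n)
    (h₁ : IsVect L₁) (h₂ : IsVect L₂) (h₃ : IsVect L₃) :
    diam L₃ (diam L₂ L₁) =
      black L₃ (black L₂ L₁) + black L₃ (white L₂ L₁) + black L₂ (white L₃ L₁) +
        black (white L₃ L₂) L₁ + white (diam L₃ L₂) L₁ := by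
  rw [diam_eq L₂ L₁ h₂, diam_add_right, diam_eq L₃ (black L₂ L₁) h₃,
    diam_eq L₃ (white L₂ L₁) h₃, diam_eq L₃ L₂ h₃, white_add_left,
    whiteB L₃ L₂ L₁ h₃, whiteC L₃ L₂ L₁ h₃]
  abel
end

section
/- For f(x) = x·e^{−x}, the iterated operator satisfies ((e^x/(1−x))·d/dx)^m (e^x) evaluated at x = 0 equals (m+1)^{m−1} for every m ≥ 0. -/
open PowerSeries

/-- Composition `(g ∘ f)(x) = g(f(x))` of formal power series (meaningful when
`f(0) = 0`): the `n`-th coefficient is `Σ_{k=0}^{n} g_k · [x^n] f^k`. -/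
noncomputable def pcomp (g f : PowerSeries ℂ) : PowerSeries ℂ :=
  PowerSeries.mk fun n =>
    ∑ k ∈ Finset.range (n + 1), (coeff k g) * coeff n (f ^ k)

/-- The operator `h ↦ (1/f'(x))·dh/dx` on formal power series. -/
noncomputable def lagOp (f : PowerSeries ℂ) (h : PowerSeries ℂ) : PowerSeries ℂ :=
  (derivativeFun f)⁻¹ * derivativeFun h

/-- The formal power series `e^x = Σ_{n≥0} xⁿ/n!`. -/
noncomputable def expS : PowerSeries ℂ := PowerSeries.mk fun n => (n.factorial : ℂ)⁻¹

/-- The operator `h ↦ (e^x/(1-x))·h'(x)` on formal power series. -/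
noncomputable def treeOp (h : PowerSeries ℂ) : PowerSeries ℂ :=
  expS * (1 - X)⁻¹ * derivativeFun h

/-! ### Auxiliary definitions -/

lemma coeff_derivativeFun' (f : PowerSeries ℂ) (n : ℕ) :
    coeff n (derivativeFun f) = coeff (n + 1) f * (n + 1) :=
  coeff_derivative f n

/-- `e^{ax}` as a formal power series. -/
noncomputable def genExp (a : ℂ) : PowerSeries ℂ :=
  PowerSeries.mk fun n => a ^ n * (n.factorial : ℂ)⁻¹

/-- `f(x) = x e^{-x}`. -/
noncomputable def fser : PowerSeries ℂ := X * genExp (-1)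

/-- `E(x) = Σ (n+1)^{n-1} x^n / n!`, i.e. `e^{T(x)}` for the tree function `T`. -/
noncomputable def Eser : PowerSeries ℂ :=
  PowerSeries.mk fun n => ((n : ℂ) + 1) ^ (n - 1) * (n.factorial : ℂ)⁻¹

lemma genExp_mul (a b : ℂ) : genExp a * genExp b = genExp (a + b) := by
  ext n
  rw [coeff_mul, Finset.Nat.sum_antidiagonal_eq_sum_range_succ_mk]
  simp only [genExp, coeff_mk]
  rw [add_pow, Finset.sum_mul]
  refine Finset.sum_congr rfl fun i hi => ?_
  have hin : i ≤ n := Nat.lt_succ_iff.mp (Finset.mem_range.mp hi)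
  rw [Nat.cast_choose ℂ hin]
  have h1 : (i.factorial : ℂ) ≠ 0 := Nat.cast_ne_zero.mpr i.factorial_ne_zero
  have h2 : ((n - i).factorial : ℂ) ≠ 0 := Nat.cast_ne_zero.mpr (n - i).factorial_ne_zero
  have h3 : (n.factorial : ℂ) ≠ 0 := Nat.cast_ne_zero.mpr n.factorial_ne_zero
  field_simp

lemma genExp_zero : genExp 0 = 1 := by
  ext n
  cases n <;> simp [genExp, coeff_one]

lemma genExp_pow (a : ℂ) (k : ℕ) : genExp a ^ k = genExp (k * a) := by
  induction k with
  | zero => simpa using genExp_zero.symm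
  | succ k ih =>
      rw [pow_succ, ih, genExp_mul]
      push_cast; ring_nf

lemma expS_eq : expS = genExp 1 := by
  ext n; simp [expS, genExp]

lemma expS_mul_genExp_neg_one : expS * genExp (-1) = 1 := by
  rw [expS_eq, genExp_mul]; simpa using genExp_zero

lemma coeff_fser_pow (k n : ℕ) :
    coeff n (fser ^ k) =
      if k ≤ n then (-(k : ℂ)) ^ (n - k) * ((n - k).factorial : ℂ)⁻¹ else 0 := by
  rw [fser, mul_pow, coeff_X_pow_mul', genExp_pow]
  simp [genExp, mul_comm]

lemma coeff_fser_pow_of_lt {k n : ℕ} (h : n < k) : coeff n (fser ^ k) = 0 := by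
  rw [coeff_fser_pow, if_neg (by omega)]

/-! ### The finite difference lemma -/

lemma alt_sum_eval (n : ℕ) (p : Polynomial ℂ) (hp : p.degree < n) :
    ∑ k ∈ Finset.range (n + 1), (-1 : ℂ) ^ k * (n.choose k : ℂ) * p.eval (k : ℂ) = 0 := by
  induction n generalizing p with
  | zero =>
      have hp0 : p = 0 := Polynomial.degree_eq_bot.mp (by
        exact_mod_cast Nat.WithBot.lt_zero_iff.mp (by exact_mod_cast hp))
      simp [hp0]
  | succ n ih =>
      by_cases hp0 : p = 0
      · simp [hp0]
      set q : Polynomial ℂ := p.comp (Polynomial.X + Polynomial.C 1) - p with hqdef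
      -- degree of the finite difference drops
      have hcomp_lc : (p.comp (Polynomial.X + Polynomial.C 1)).leadingCoeff = p.leadingCoeff := by
        rw [Polynomial.leadingCoeff_comp (by rw [Polynomial.natDegree_X_add_C]; omega),
          (Polynomial.monic_X_add_C (1:ℂ)).leadingCoeff, one_pow, mul_one]
      have hcomp_ne : p.comp (Polynomial.X + Polynomial.C 1) ≠ 0 := by
        intro h
        apply hp0
        have := hcomp_lc
        rw [h] at this
        simp at this
        exact Polynomial.leadingCoeff_eq_zero.mp this.symm
      have hcomp_deg : (p.comp (Polynomial.X + Polynomial.C 1)).degree = p.degree := by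
        rw [Polynomial.degree_eq_natDegree hcomp_ne, Polynomial.degree_eq_natDegree hp0,
          Polynomial.natDegree_comp, Polynomial.natDegree_X_add_C, mul_one]
      have hdq : q.degree < n := by
        have h1 : q.degree < p.degree := by
          have := Polynomial.degree_sub_lt hcomp_deg hcomp_ne hcomp_lc
          rwa [hcomp_deg] at this
        have h2 : p.degree ≤ (n : WithBot ℕ) := by
          rw [Polynomial.degree_eq_natDegree hp0] at hp ⊢
          exact_mod_cast Nat.lt_succ_iff.mp (by exact_mod_cast hp)
        exact lt_of_lt_of_le h1 h2
      have hqe : ∀ k : ℕ, q.eval (k : ℂ) = p.eval ((k : ℂ) + 1) - p.eval (k : ℂ) := by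
        intro k
        simp [hqdef, Polynomial.eval_comp, add_comm]
      -- named sums
      have hA : ∑ j ∈ Finset.range (n + 1), (-1 : ℂ) ^ j * (n.choose j : ℂ) * q.eval (j : ℂ)
          = 0 := ih q hdq
      rw [Finset.sum_range_succ' _ (n + 1)]
      have hsplit : ∀ i ∈ Finset.range (n + 1),
          (-1 : ℂ) ^ (i + 1) * (((n + 1).choose (i + 1) : ℕ) : ℂ) * p.eval ((i + 1 : ℕ) : ℂ)
          = -((-1 : ℂ) ^ i * (n.choose i : ℂ) * p.eval ((i : ℂ) + 1))
            + (-((-1 : ℂ) ^ i * ((n.choose (i + 1) : ℕ) : ℂ) * p.eval ((i : ℂ) + 1))) := by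
        intro i _
        rw [Nat.choose_succ_succ]
        push_cast
        ring
      rw [Finset.sum_congr rfl hsplit, Finset.sum_add_distrib]
      have e1 : ∑ i ∈ Finset.range (n + 1),
          -((-1 : ℂ) ^ i * (n.choose i : ℂ) * p.eval ((i : ℂ) + 1))
          = - ∑ i ∈ Finset.range (n + 1),
              (-1 : ℂ) ^ i * (n.choose i : ℂ) * p.eval ((i : ℂ) + 1) := by
        rw [Finset.sum_neg_distrib]
      have e2 : ∑ i ∈ Finset.range (n + 1),
          -((-1 : ℂ) ^ i * ((n.choose (i + 1) : ℕ) : ℂ) * p.eval ((i : ℂ) + 1))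
          = - ∑ i ∈ Finset.range (n + 1),
              (-1 : ℂ) ^ i * ((n.choose (i + 1) : ℕ) : ℂ) * p.eval ((i : ℂ) + 1) := by
        rw [Finset.sum_neg_distrib]
      rw [e1, e2]
      -- second sum equals (B - p(0)) where B is the alternating n-sum of p
      have h3 : ∑ k ∈ Finset.range (n + 2), (-1 : ℂ) ^ k * (n.choose k : ℂ) * p.eval (k : ℂ)
          = ∑ k ∈ Finset.range (n + 1), (-1 : ℂ) ^ k * (n.choose k : ℂ) * p.eval (k : ℂ) := by
        rw [Finset.sum_range_succ]
        simp [Nat.choose_succ_self]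
      have h4 : ∑ k ∈ Finset.range (n + 2), (-1 : ℂ) ^ k * (n.choose k : ℂ) * p.eval (k : ℂ)
          = (∑ i ∈ Finset.range (n + 1),
              -((-1 : ℂ) ^ i * ((n.choose (i + 1) : ℕ) : ℂ) * p.eval ((i : ℂ) + 1)))
            + p.eval 0 := by
        rw [Finset.sum_range_succ' _ (n + 1)]
        simp only [pow_zero, Nat.choose_zero_right, Nat.cast_one, one_mul, Nat.cast_zero]
        congr 1
        refine Finset.sum_congr rfl fun i _ => ?_
        push_cast
        ring
      -- the difference identity: A - B = 0 from hA
      have h5 : (∑ i ∈ Finset.range (n + 1),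
            (-1 : ℂ) ^ i * (n.choose i : ℂ) * p.eval ((i : ℂ) + 1))
          - ∑ k ∈ Finset.range (n + 1), (-1 : ℂ) ^ k * (n.choose k : ℂ) * p.eval (k : ℂ) = 0 := by
        rw [← hA, ← Finset.sum_sub_distrib]
        refine Finset.sum_congr rfl fun j _ => ?_
        rw [hqe j]
        ring
      rw [e2] at h4
      simp only [Nat.cast_zero, Nat.choose_zero_right, Nat.cast_one, one_mul, pow_zero]
      linear_combination h3 - h4 - h5

/-! ### The Abel identity -/

noncomputable def Bp (n : ℕ) : Polynomial ℂ :=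
  ∑ k ∈ Finset.range (n + 1),
    Polynomial.C ((n.choose k : ℂ) * ((k : ℂ) + 1) ^ (k - 1)) *
      (Polynomial.X - Polynomial.C (k : ℂ)) ^ (n - k)

lemma poly_ext {p q : Polynomial ℂ} (h1 : Polynomial.derivative p = Polynomial.derivative q)
    (h2 : p.eval (-1) = q.eval (-1)) : p = q := by
  have hd : Polynomial.derivative (p - q) = 0 := by
    rw [Polynomial.derivative_sub, h1, sub_self]
  have hc : p - q = Polynomial.C ((p - q).coeff 0) :=
    Polynomial.eq_C_of_natDegree_eq_zero (Polynomial.natDegree_eq_zero_of_derivative_eq_zero hd)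
  have he : (p - q).eval (-1) = 0 := by rw [Polynomial.eval_sub, h2, sub_self]
  rw [hc, Polynomial.eval_C] at he
  have : p - q = 0 := by rw [hc, he, map_zero]
  exact sub_eq_zero.mp this

lemma choose_id (n k : ℕ) (h : k ≤ n) :
    (n + 1).choose k * (n + 1 - k) = (n + 1) * n.choose k := by
  have h1 := Nat.add_one_mul_choose_eq n (n - k)
  rw [Nat.choose_symm h] at h1
  have h2 : n - k + 1 = n + 1 - k := by omega
  have h3 : (n + 1).choose (n + 1 - k) = (n + 1).choose k := Nat.choose_symm (by omega)
  have h1' : (n + 1) * n.choose k = (n + 1).choose (n + 1 - k) * (n + 1 - k) := by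
    simpa [h2] using h1
  rw [h3] at h1'
  omega

lemma Bp_succ_derivative (n : ℕ) :
    Polynomial.derivative (Bp (n + 1)) = Polynomial.C ((n : ℂ) + 1) * Bp n := by
  rw [Bp, Bp, map_sum, Finset.mul_sum, Finset.sum_range_succ]
  have hlast : Polynomial.derivative
      (Polynomial.C ((((n+1).choose (n+1) : ℕ) : ℂ) * (((n+1 : ℕ) : ℂ) + 1) ^ ((n+1) - 1)) *
        (Polynomial.X - Polynomial.C ((n+1 : ℕ) : ℂ)) ^ (n + 1 - (n + 1))) = 0 := by
    rw [Nat.sub_self, pow_zero, mul_one, Polynomial.derivative_C]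
  rw [hlast, add_zero]
  refine Finset.sum_congr rfl fun k hk => ?_
  have hk' : k ≤ n := Nat.lt_succ_iff.mp (Finset.mem_range.mp hk)
  rw [Polynomial.derivative_C_mul, Polynomial.derivative_X_sub_C_pow]
  have he : n + 1 - k - 1 = n - k := by omega
  rw [he, ← mul_assoc, ← map_mul, ← mul_assoc, ← map_mul]
  congr 2
  have hc' : ((((n+1).choose k) * (n + 1 - k) : ℕ) : ℂ) = (((n+1) * n.choose k : ℕ) : ℂ) := by
    exact_mod_cast choose_id n k hk'
  push_cast [Nat.cast_sub (show k ≤ n+1 by omega)] at hc' ⊢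
  linear_combination ((k:ℂ)+1)^(k-1) * hc'

lemma Bp_eq (n : ℕ) : Bp n = (Polynomial.X + Polynomial.C 1) ^ n := by
  induction n with
  | zero => simp [Bp]
  | succ n ih =>
      refine poly_ext ?_ ?_
      · rw [Bp_succ_derivative, ih, Polynomial.derivative_pow]
        simp only [Polynomial.derivative_add, Polynomial.derivative_X, Polynomial.derivative_C,
          add_zero, mul_one, Nat.add_sub_cancel]
        have : Polynomial.C (((n+1 : ℕ)) : ℂ) = Polynomial.C ((n : ℂ) + 1) := by
          norm_num
        rw [this]
      · have hL : (Bp (n+1)).eval (-1) = 0 := by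
          rw [Bp, Polynomial.eval_finset_sum]
          have hterm : ∀ k ∈ Finset.range (n+2),
              (Polynomial.C ((((n+1).choose k : ℕ) : ℂ) * ((k:ℂ)+1)^(k-1)) *
                (Polynomial.X - Polynomial.C (k:ℂ))^(n+1-k)).eval (-1)
              = (-1:ℂ)^(n+1) * ((-1:ℂ)^k * (((n+1).choose k : ℕ) : ℂ)
                  * ((Polynomial.X + Polynomial.C 1 : Polynomial ℂ)^n).eval (k:ℂ)) := by
            intro k hk
            have hk' : k ≤ n+1 := Nat.lt_succ_iff.mp (Finset.mem_range.mp hk)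
            simp only [Polynomial.eval_mul, Polynomial.eval_C, Polynomial.eval_pow,
              Polynomial.eval_sub, Polynomial.eval_X, Polynomial.eval_add, Polynomial.eval_one]
            have h1 : (-1 - (k:ℂ)) = -((k:ℂ)+1) := by ring
            rw [h1, neg_pow]
            have h2 : ((k:ℂ)+1)^(k-1) * ((k:ℂ)+1)^(n+1-k) = ((k:ℂ)+1)^n := by
              rcases Nat.eq_zero_or_pos k with h0 | hpos
              · subst h0; norm_num
              · rw [← pow_add]
                congr 1
                omega
            have h3 : (-1:ℂ)^(n+1-k) = (-1:ℂ)^(n+1) * (-1:ℂ)^k := by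
              have he : n+1+k = (n+1-k) + 2*k := by omega
              rw [← pow_add, he, pow_add, pow_mul]
              norm_num
            rw [h3]
            linear_combination (-1:ℂ)^(n+1) * (-1:ℂ)^k * (((n+1).choose k : ℕ) : ℂ) * h2
          rw [Finset.sum_congr rfl hterm, ← Finset.mul_sum]
          have hdeg : ((Polynomial.X + Polynomial.C 1 : Polynomial ℂ)^n).degree < (n+1 : ℕ) := by
            rw [Polynomial.degree_pow, Polynomial.degree_X_add_C]
            exact_mod_cast by
              rw [nsmul_eq_mul, mul_one]
              exact_mod_cast Nat.lt_succ_self n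
          rw [alt_sum_eval (n+1) _ hdeg, mul_zero]
        rw [hL]
        have : ((-1 : ℂ) + 1) = 0 := by ring
        rw [Polynomial.eval_pow, Polynomial.eval_add, Polynomial.eval_X, Polynomial.eval_C, this,
          zero_pow (Nat.succ_ne_zero n)]

lemma abel_sum (n : ℕ) :
    ∑ k ∈ Finset.range (n + 1),
      (n.choose k : ℂ) * ((k : ℂ) + 1) ^ (k - 1) * (-(k : ℂ)) ^ (n - k) = 1 := by
  have hB := congrArg (Polynomial.eval (0 : ℂ)) (Bp_eq n)
  rw [Bp, Polynomial.eval_finset_sum] at hB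
  simp only [Polynomial.eval_mul, Polynomial.eval_C, Polynomial.eval_pow, Polynomial.eval_sub,
    Polynomial.eval_X, Polynomial.eval_add, Polynomial.eval_one, zero_sub, zero_add, one_pow] at hB
  simpa using hB

/-! ### Power series lemmas -/

lemma derivativeFun_fser : derivativeFun fser = (1 - X) * genExp (-1) := by
  ext n
  rw [coeff_derivativeFun', sub_mul, one_mul, map_sub, fser, coeff_succ_X_mul]
  cases n with
  | zero => simp [genExp]
  | succ m =>
      rw [coeff_succ_X_mul]
      simp only [genExp, coeff_mk]
      have h1 : (m.factorial : ℂ) ≠ 0 := Nat.cast_ne_zero.mpr m.factorial_ne_zero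
      have h2 : ((m+1).factorial : ℂ) ≠ 0 := Nat.cast_ne_zero.mpr (m+1).factorial_ne_zero
      have h3 : ((m : ℂ) + 1) * m.factorial ≠ 0 :=
        mul_ne_zero (Nat.cast_add_one_ne_zero m) h1
      rw [pow_succ (-1 : ℂ) m, Nat.factorial_succ]
      push_cast
      field_simp
      ring

lemma derivativeFun_pow' (f : PowerSeries ℂ) (k : ℕ) :
    derivativeFun (f ^ (k + 1)) = C ((k : ℂ) + 1) * (f ^ k * derivativeFun f) := by
  induction k with
  | zero => simp
  | succ k ih =>
      rw [pow_succ, derivativeFun_mul, ih]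
      have : C ((k : ℂ) + 1 + 1) = C ((k : ℂ) + 1) + 1 := by
        rw [map_add, map_one]
      push_cast
      rw [this]
      simp only [smul_eq_mul]
      ring

lemma pcomp_deriv (g : PowerSeries ℂ) :
    derivativeFun (pcomp g fser) = pcomp (derivativeFun g) fser * derivativeFun fser := by
  ext n
  rw [coeff_derivativeFun', coeff_mul, Finset.Nat.sum_antidiagonal_eq_sum_range_succ_mk]
  simp only [pcomp, coeff_mk]
  have lhs_eq : (∑ k ∈ Finset.range (n + 1 + 1), coeff k g * coeff (n+1) (fser ^ k))
        * ((n : ℂ) + 1)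
      = ∑ j ∈ Finset.range (n + 1),
          coeff (j+1) g * ((j : ℂ) + 1) * coeff n (fser ^ j * derivativeFun fser) := by
    rw [Finset.sum_mul, Finset.sum_range_succ']
    have h0 : coeff 0 g * coeff (n+1) (fser ^ 0) * ((n : ℂ) + 1) = 0 := by
      simp [coeff_one]
    rw [h0, add_zero]
    refine Finset.sum_congr rfl fun j _ => ?_
    have hD : coeff (n+1) (fser ^ (j+1)) * ((n : ℂ)+1)
        = ((j : ℂ) + 1) * coeff n (fser ^ j * derivativeFun fser) := by
      have := coeff_derivativeFun' (fser ^ (j+1)) n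
      rw [derivativeFun_pow', coeff_C_mul] at this
      exact this.symm
    rw [mul_assoc, hD]
    ring
  have rhs_eq : ∑ i ∈ Finset.range (n + 1),
        (∑ j ∈ Finset.range (i + 1), coeff j (derivativeFun g) * coeff i (fser ^ j))
          * coeff (n - i) (derivativeFun fser)
      = ∑ j ∈ Finset.range (n + 1),
          coeff (j+1) g * ((j : ℂ) + 1) * coeff n (fser ^ j * derivativeFun fser) := by
    have hext : ∀ i ∈ Finset.range (n+1),
        (∑ j ∈ Finset.range (i+1), coeff j (derivativeFun g) * coeff i (fser ^ j))
          * coeff (n - i) (derivativeFun fser)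
        = ∑ j ∈ Finset.range (n+1),
            coeff j (derivativeFun g) * coeff i (fser ^ j)
              * coeff (n - i) (derivativeFun fser) := by
      intro i hi
      rw [Finset.sum_mul]
      refine Finset.sum_subset (Finset.range_subset_range.mpr (by
        have := Finset.mem_range.mp hi; omega)) fun j hj hj2 => ?_
      rw [coeff_fser_pow_of_lt (by
        simp only [Finset.mem_range] at hj hj2; omega), mul_zero, zero_mul]
    rw [Finset.sum_congr rfl hext, Finset.sum_comm]
    refine Finset.sum_congr rfl fun j _ => ?_
    calc ∑ i ∈ Finset.range (n+1),
            coeff j (derivativeFun g) * coeff i (fser ^ j)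
              * coeff (n - i) (derivativeFun fser)
        = coeff j (derivativeFun g)
            * ∑ i ∈ Finset.range (n+1),
                coeff i (fser ^ j) * coeff (n - i) (derivativeFun fser) := by
          rw [Finset.mul_sum]
          exact Finset.sum_congr rfl fun i _ => (mul_assoc _ _ _)
      _ = coeff j (derivativeFun g) * coeff n (fser ^ j * derivativeFun fser) := by
          rw [coeff_mul, Finset.Nat.sum_antidiagonal_eq_sum_range_succ_mk]
      _ = coeff (j+1) g * ((j : ℂ) + 1) * coeff n (fser ^ j * derivativeFun fser) := by
          rw [coeff_derivativeFun']
          try push_cast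
          try ring
  rw [lhs_eq, rhs_eq]

lemma treeOp_pcomp (g : PowerSeries ℂ) :
    treeOp (pcomp g fser) = pcomp (derivativeFun g) fser := by
  rw [treeOp, pcomp_deriv, derivativeFun_fser]
  have h2 : (1 - X : PowerSeries ℂ)⁻¹ * (1 - X) = 1 :=
    PowerSeries.inv_mul_cancel _ (by simp)
  calc expS * (1-X)⁻¹ * (pcomp (derivativeFun g) fser * ((1-X) * genExp (-1)))
      = pcomp (derivativeFun g) fser * ((expS * genExp (-1)) * ((1-X)⁻¹ * (1-X))) := by
        ring
    _ = pcomp (derivativeFun g) fser := by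
        rw [expS_mul_genExp_neg_one, h2, mul_one, mul_one]

lemma pcomp_Eser : pcomp Eser fser = expS := by
  ext n
  simp only [pcomp, coeff_mk, expS, Eser]
  have hterm : ∀ k ∈ Finset.range (n+1),
      ((k:ℂ)+1)^(k-1) * (k.factorial : ℂ)⁻¹ * coeff n (fser ^ k)
      = (n.factorial : ℂ)⁻¹ *
          ((n.choose k : ℂ) * ((k:ℂ)+1)^(k-1) * (-(k:ℂ))^(n-k)) := by
    intro k hk
    have hkn : k ≤ n := Nat.lt_succ_iff.mp (Finset.mem_range.mp hk)
    rw [coeff_fser_pow, if_pos hkn, Nat.cast_choose ℂ hkn]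
    have h1 : (k.factorial : ℂ) ≠ 0 := Nat.cast_ne_zero.mpr k.factorial_ne_zero
    have h2 : ((n - k).factorial : ℂ) ≠ 0 := Nat.cast_ne_zero.mpr (n - k).factorial_ne_zero
    have h3 : (n.factorial : ℂ) ≠ 0 := Nat.cast_ne_zero.mpr n.factorial_ne_zero
    field_simp
  rw [Finset.sum_congr rfl hterm, ← Finset.mul_sum, abel_sum, mul_one]

lemma constantCoeff_pcomp (h : PowerSeries ℂ) :
    constantCoeff (pcomp h fser) = coeff 0 h := by
  rw [← coeff_zero_eq_constantCoeff_apply]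
  simp [pcomp, coeff_one]

lemma coeff_zero_iter_deriv (m : ℕ) (h : PowerSeries ℂ) :
    coeff 0 (derivativeFun^[m] h) = (m.factorial : ℂ) * coeff m h := by
  induction m generalizing h with
  | zero => simp
  | succ m ih =>
      rw [Function.iterate_succ_apply, ih, coeff_derivativeFun']
      push_cast [Nat.factorial_succ]; ring

lemma treeOp_iter (m : ℕ) :
    treeOp^[m] expS = pcomp (derivativeFun^[m] Eser) fser := by
  induction m with
  | zero => simpa using pcomp_Eser.symm
  | succ m ih =>
      rw [Function.iterate_succ_apply', ih, treeOp_pcomp]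
      exact congrArg (fun h => pcomp h fser) (Function.iterate_succ_apply' derivativeFun m Eser).symm

/-- `((e^x/(1-x))·d/dx)^m (e^x)|_{x=0} = (m+1)^{m-1}` for all `m ≥ 0`
(for `m = 0` the exponent `m - 1` is natural subtraction, giving `1 = (0+1)^0`). -/
theorem treeOp_iterate (m : ℕ) :
    constantCoeff (treeOp^[m] expS) = ((m : ℂ) + 1) ^ (m - 1) := by
  rw [treeOp_iter, constantCoeff_pcomp, coeff_zero_iter_deriv]
  rw [Eser, coeff_mk]
  have : (m.factorial : ℂ) ≠ 0 := Nat.cast_ne_zero.mpr m.factorial_ne_zero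
  field_simp
end
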